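/- Let G₁ and G₂ be connected simple graphs, each on n vertices with m edges, with signless Laplacian spectra μ⁺₁ ≥ ⋯ ≥ μ⁺_n > 0 and λ⁺₁ ≥ ⋯ ≥ λ⁺_n > 0 respectively (so all signless Laplacian eigenvalues are positive). If p is a positive integer such that 2m/(p+n) < min(μ⁺_n, λ⁺_n), then LE⁺(G₁ ∪ K̄_p) = LE⁺(G₂ ∪ K̄_p). -/

import Mathlib

open SimpleGraph Matrix Finset

/-- The number of edges of a simple graph. -/
noncomputable def edgeCount {V : Type*} (G : SimpleGraph V) : ℕ := G.edgeSet.ncard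

/-- The Laplacian spectrum of a finite simple graph, as a multiset of real numbers. -/
noncomputable def lapSpec {V : Type*} [Fintype V] (G : SimpleGraph V) : Multiset ℝ := by
  classical
  exact Finset.univ.val.map (G.posSemidef_lapMatrix ℝ).1.eigenvalues

/-- The signless Laplacian matrix `D + A` is Hermitian. -/
theorem signless_isHermitian {V : Type*} [Fintype V] [DecidableEq V] (G : SimpleGraph V)
    [DecidableRel G.Adj] : (G.degMatrix ℝ + G.adjMatrix ℝ).IsHermitian := by
  rw [Matrix.IsHermitian, conjTranspose_eq_transpose_of_trivial]
  exact Matrix.IsSymm.add (isSymm_degMatrix (R := ℝ) (G := G)) (isSymm_adjMatrix G)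

/-- The signless Laplacian spectrum of a finite simple graph, as a multiset of reals. -/
noncomputable def signlessLapSpec {V : Type*} [Fintype V] (G : SimpleGraph V) : Multiset ℝ := by
  classical
  exact Finset.univ.val.map (signless_isHermitian G).eigenvalues

/-- The Laplacian energy `LE(G) = ∑ |μ_i - 2m/n|`. -/
noncomputable def lapEnergy {V : Type*} [Fintype V] (G : SimpleGraph V) : ℝ :=
  ((lapSpec G).map (fun x => |x - 2 * (edgeCount G : ℝ) / (Fintype.card V : ℝ)|)).sum

/-- The signless Laplacian energy `LE⁺(G) = ∑ |μ⁺_i - 2m/n|`. -/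
noncomputable def signlessLapEnergy {V : Type*} [Fintype V] (G : SimpleGraph V) : ℝ :=
  ((signlessLapSpec G).map (fun x => |x - 2 * (edgeCount G : ℝ) / (Fintype.card V : ℝ)|)).sum

/-- The join `G ∨ H` of two graphs: disjoint union plus all edges between them. -/
def SimpleGraph.join {V W : Type*} (G : SimpleGraph V) (H : SimpleGraph W) :
    SimpleGraph (V ⊕ W) where
  Adj a b :=
    match a, b with
    | Sum.inl u, Sum.inl v => G.Adj u v
    | Sum.inr u, Sum.inr v => H.Adj u v
    | Sum.inl _, Sum.inr _ => True
    | Sum.inr _, Sum.inl _ => True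
  symm := ⟨by rintro (u | u) (v | v) h <;> simp_all [adj_comm]⟩
  loopless := ⟨by rintro (u | u) h <;> simp_all⟩

/-- The tensor (Kronecker) product `G ⊗ H` of two graphs. -/
def SimpleGraph.tensorProd {V W : Type*} (G : SimpleGraph V) (H : SimpleGraph W) :
    SimpleGraph (V × W) where
  Adj a b := G.Adj a.1 b.1 ∧ H.Adj a.2 b.2
  symm := ⟨fun a b h => ⟨h.1.symm, h.2.symm⟩⟩
  loopless := ⟨fun a h => G.irrefl h.1⟩


section Aux
open Polynomial
open Matrix Polynomial Finset

variable {V : Type*} [Fintype V] [DecidableEq V]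

lemma my_charpoly_conj (U D : Matrix V V ℝ) (hU : U * star U = 1) :
    (U * D * star U).charpoly = D.charpoly := by
  have hmap : (U.map C) * ((star U).map C) = 1 := by
    rw [← Matrix.map_mul, hU, Matrix.map_one _ (map_zero C) (map_one C)]
  have hchar : charmatrix (U * D * star U) = U.map C * charmatrix D * (star U).map C := by
    unfold charmatrix
    simp only [RingHom.mapMatrix_apply]
    rw [Matrix.map_mul, Matrix.map_mul, mul_sub, sub_mul]
    congr 1
    · rw [mul_assoc, scalar_commute (n := V) (X : ℝ[X]) (fun r => Commute.all _ _) ((star U).map C), ← mul_assoc, hmap, one_mul]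
  have hdet1 : (U.map C).det * ((star U).map C).det = 1 := by
    rw [← det_mul, hmap, det_one]
  rw [Matrix.charpoly, hchar, det_mul, det_mul, Matrix.charpoly]
  rw [mul_right_comm, hdet1, one_mul]

lemma my_charpoly_diagonal (d : V → ℝ) :
    (Matrix.diagonal d).charpoly = ∏ i, (X - C (d i)) := by
  have : charmatrix (Matrix.diagonal d) = Matrix.diagonal (fun i => X - C (d i)) := by
    ext i j
    by_cases h : i = j
    · subst h; simp [charmatrix_apply_eq]
    · simp [charmatrix_apply_ne _ _ _ h, Matrix.diagonal_apply_ne _ h]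
  rw [Matrix.charpoly, this, det_diagonal]

lemma herm_charpoly {A : Matrix V V ℝ} (hA : A.IsHermitian) :
    A.charpoly = ∏ i, (X - C (hA.eigenvalues i)) := by
  have hU : (hA.eigenvectorUnitary : Matrix V V ℝ) * star (hA.eigenvectorUnitary : Matrix V V ℝ) = 1 :=
    Matrix.mem_unitaryGroup_iff.mp hA.eigenvectorUnitary.2
  have hd : Matrix.diagonal (RCLike.ofReal ∘ hA.eigenvalues) = Matrix.diagonal hA.eigenvalues := by
    congr 1
  conv_lhs => rw [hA.spectral_theorem]
  rw [Unitary.conjStarAlgAut_apply, my_charpoly_conj _ _ hU, my_charpoly_diagonal]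
  rfl

lemma eig_multiset_eq_roots {A : Matrix V V ℝ} (hA : A.IsHermitian) :
    Finset.univ.val.map hA.eigenvalues = A.charpoly.roots := by
  rw [herm_charpoly hA, ← Polynomial.roots_multiset_prod_X_sub_C (Finset.univ.val.map hA.eigenvalues)]
  congr 1
  rw [Multiset.map_map]
  rfl

lemma eig_sum_eq_trace {A : Matrix V V ℝ} (hA : A.IsHermitian) :
    ∑ i, hA.eigenvalues i = A.trace := by
  have hsplit : A.charpoly.Splits := by
    rw [herm_charpoly hA]
    exact Splits.prod (fun i _ => Splits.X_sub_C _)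
  rw [Matrix.trace_eq_sum_roots_charpoly_of_splits hsplit, ← eig_multiset_eq_roots hA]
  rfl

lemma signlessLapSpec_eq_roots {V : Type*} [Fintype V] [DecidableEq V] (G : SimpleGraph V) [DecidableRel G.Adj] :
    signlessLapSpec G = (G.degMatrix ℝ + G.adjMatrix ℝ).charpoly.roots := by
  have : signlessLapSpec G = Finset.univ.val.map (signless_isHermitian G).eigenvalues := by
    unfold signlessLapSpec
    congr! <;> exact Subsingleton.elim _ _
  rw [this, eig_multiset_eq_roots]

lemma neighborSet_sum_inl {V W : Type*} (G : SimpleGraph V) (H : SimpleGraph W) (v : V) :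
    (G ⊕g H).neighborSet (Sum.inl v) = Sum.inl '' G.neighborSet v := by
  ext (w | w) <;> simp

lemma neighborSet_sum_inr_bot {V W : Type*} (G : SimpleGraph V) (w : W) :
    (G ⊕g (⊥ : SimpleGraph W)).neighborSet (Sum.inr w) = ∅ := by
  ext (u | u) <;> simp

lemma degree_sum_inl {V W : Type*} [Fintype V] [Fintype W] (G : SimpleGraph V)
    (H : SimpleGraph W) [DecidableRel G.Adj] [DecidableRel (G ⊕g H).Adj] (v : V) :
    (G ⊕g H).degree (Sum.inl v) = G.degree v := by
  classical
  rw [← card_neighborSet_eq_degree, ← card_neighborSet_eq_degree]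
  have h := neighborSet_sum_inl G H v
  have : Fintype.card ((G ⊕g H).neighborSet (Sum.inl v))
      = Fintype.card (Sum.inl '' G.neighborSet v : Set (V ⊕ W)) := by
    apply Fintype.card_congr; rw [h]
  convert this.trans ?_
  exact Fintype.card_congr (Equiv.Set.image _ _ Sum.inl_injective).symm

lemma degree_sum_inr_bot {V W : Type*} [Fintype V] [Fintype W] (G : SimpleGraph V)
    [DecidableRel (G ⊕g (⊥ : SimpleGraph W)).Adj] (w : W) :
    (G ⊕g (⊥ : SimpleGraph W)).degree (Sum.inr w) = 0 := by
  classical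
  rw [← card_neighborSet_eq_degree]
  have h := neighborSet_sum_inr_bot G w
  have : Fintype.card ((G ⊕g (⊥ : SimpleGraph W)).neighborSet (Sum.inr w))
      = Fintype.card ((∅ : Set (V ⊕ W))) := by
    apply Fintype.card_congr; rw [h]
  simpa using this

lemma Q_sum_bot {V W : Type*} [Fintype V] [Fintype W] [DecidableEq V] [DecidableEq W]
    (G : SimpleGraph V) [DecidableRel G.Adj]
    [DecidableRel (G ⊕g (⊥ : SimpleGraph W)).Adj] :
    (G ⊕g (⊥ : SimpleGraph W)).degMatrix ℝ + (G ⊕g (⊥ : SimpleGraph W)).adjMatrix ℝ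
      = Matrix.fromBlocks (G.degMatrix ℝ + G.adjMatrix ℝ) 0 0 0 := by
  ext (i | i) (j | j) <;>
    simp [SimpleGraph.degMatrix, Matrix.diagonal, degree_sum_inl, degree_sum_inr_bot,
      Matrix.fromBlocks]

lemma trace_Q {V : Type*} [Fintype V] [DecidableEq V] (G : SimpleGraph V)
    [DecidableRel G.Adj] :
    (G.degMatrix ℝ + G.adjMatrix ℝ).trace = 2 * (edgeCount G : ℝ) := by
  classical
  rw [Matrix.trace_add, SimpleGraph.trace_adjMatrix, add_zero, SimpleGraph.degMatrix,
    Matrix.trace_diagonal]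
  have h1 : (∑ v, G.degree v) = 2 * G.edgeFinset.card := G.sum_degrees_eq_twice_card_edges
  have h2 : edgeCount G = G.edgeFinset.card := Set.ncard_eq_toFinset_card' _
  rw [h2]
  exact_mod_cast congrArg (Nat.cast : ℕ → ℝ) h1

lemma spec_sum_bot {V W : Type*} [Fintype V] [Fintype W] [DecidableEq V] [DecidableEq W]
    (G : SimpleGraph V) [DecidableRel G.Adj] :
    signlessLapSpec (G ⊕g (⊥ : SimpleGraph W))
      = signlessLapSpec G + Multiset.replicate (Fintype.card W) 0 := by
  classical
  rw [signlessLapSpec_eq_roots, signlessLapSpec_eq_roots, Q_sum_bot,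
    Matrix.charpoly_fromBlocks_zero₁₂]
  have h0 : (0 : Matrix W W ℝ).charpoly = X ^ Fintype.card W := by
    rw [← Matrix.diagonal_zero, my_charpoly_diagonal]
    simp
  rw [h0, Polynomial.roots_mul, Polynomial.roots_pow, Polynomial.roots_X]
  · rw [Multiset.nsmul_singleton]
  · exact mul_ne_zero (Matrix.charpoly_monic _).ne_zero (pow_ne_zero _ Polynomial.X_ne_zero)

lemma edgeCount_sum_bot {V W : Type*} [Fintype V] [Fintype W] [DecidableEq V] [DecidableEq W]
    (G : SimpleGraph V) [DecidableRel G.Adj]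
    [DecidableRel (G ⊕g (⊥ : SimpleGraph W)).Adj] :
    edgeCount (G ⊕g (⊥ : SimpleGraph W)) = edgeCount G := by
  classical
  have h1 := trace_Q (G ⊕g (⊥ : SimpleGraph W))
  rw [Q_sum_bot] at h1
  have h2 : (Matrix.fromBlocks (G.degMatrix ℝ + G.adjMatrix ℝ) 0 0 0
      : Matrix (V ⊕ W) (V ⊕ W) ℝ).trace = (G.degMatrix ℝ + G.adjMatrix ℝ).trace := by
    simp [Matrix.trace, Fintype.sum_sum_type, Matrix.fromBlocks]
  rw [h2, trace_Q] at h1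
  have := mul_left_cancel₀ (two_ne_zero (α := ℝ)) h1
  exact_mod_cast this.symm

lemma energy_calc {n p : ℕ} (m : ℕ) (hp : 0 < p) (G : SimpleGraph (Fin n))
    [DecidableRel G.Adj] (μ : Fin n → ℝ)
    (hm : edgeCount G = m)
    (hspec : signlessLapSpec G = Finset.univ.val.map μ)
    (hlb : ∀ i, 2 * (m : ℝ) / ((n : ℝ) + (p : ℝ)) < μ i) :
    signlessLapEnergy (G ⊕g (⊥ : SimpleGraph (Fin p))) =
      2 * (m : ℝ) - (n : ℝ) * (2 * (m : ℝ) / ((n : ℝ) + (p : ℝ)))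
        + (p : ℝ) * (2 * (m : ℝ) / ((n : ℝ) + (p : ℝ))) := by
  classical
  set c : ℝ := 2 * (m : ℝ) / ((n : ℝ) + (p : ℝ)) with hc
  have hc0 : 0 ≤ c := by
    apply div_nonneg (by positivity)
    positivity
  have hcard : (Fintype.card (Fin n ⊕ Fin p) : ℝ) = (n : ℝ) + (p : ℝ) := by
    simp
  have hm' : edgeCount (G ⊕g (⊥ : SimpleGraph (Fin p))) = m := by
    rw [edgeCount_sum_bot, hm]
  have hsum : (∑ i, μ i) = 2 * (m : ℝ) := by
    have h1 : (signlessLapSpec G).sum = ∑ i, μ i := by rw [hspec]; rfl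
    have h2 : signlessLapSpec G = Finset.univ.val.map (signless_isHermitian G).eigenvalues := by
      unfold signlessLapSpec
      congr!
    rw [h2] at h1
    have h3 : (Finset.univ.val.map (signless_isHermitian G).eigenvalues).sum
        = ∑ i, (signless_isHermitian G).eigenvalues i := rfl
    rw [h3, eig_sum_eq_trace, trace_Q, hm] at h1
    exact h1.symm
  unfold signlessLapEnergy
  rw [spec_sum_bot, hm', hcard]
  rw [Multiset.map_add, Multiset.sum_add, Multiset.map_replicate, Multiset.sum_replicate, hspec,
    Multiset.map_map]
  have habs : ∀ i : Fin n, |μ i - c| = μ i - c := fun i => abs_of_nonneg (by linarith [hlb i])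
  have hterm : ((Finset.univ.val.map fun i => |μ i - 2 * (m:ℝ) / ((n:ℝ)+(p:ℝ))|)).sum
      = ∑ i, (μ i - c) := by
    rw [← hc]
    exact Finset.sum_congr rfl (fun i _ => habs i)
  rw [Fintype.card_fin]
  calc ((Finset.univ.val.map fun x => |μ x - 2 * (m:ℝ) / ((n:ℝ)+(p:ℝ))|)).sum
        + (p : ℕ) • |0 - 2 * (m:ℝ) / ((n:ℝ)+(p:ℝ))|
      = (∑ i, (μ i - c)) + (p : ℝ) * c := by
        rw [hterm]
        congr 1
        rw [nsmul_eq_mul, ← hc]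
        rw [abs_of_nonpos (by linarith), neg_sub, sub_zero]
    _ = 2 * (m : ℝ) - (n : ℝ) * c + (p : ℝ) * c := by
        rw [Finset.sum_sub_distrib, hsum, Finset.sum_const, Finset.card_univ, Fintype.card_fin,
          nsmul_eq_mul]

end Aux

theorem stmt1 (n m p : ℕ) (hn : 1 ≤ n) (hp : 0 < p)
    (G₁ G₂ : SimpleGraph (Fin n))
    (hc₁ : G₁.Connected) (hc₂ : G₂.Connected)
    (hm₁ : edgeCount G₁ = m) (hm₂ : edgeCount G₂ = m)
    (μ ν : Fin n → ℝ) (hμmono : Antitone μ) (hνmono : Antitone ν)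
    (hμspec : signlessLapSpec G₁ = Finset.univ.val.map μ)
    (hνspec : signlessLapSpec G₂ = Finset.univ.val.map ν)
    (hμpos : 0 < μ ⟨n - 1, by omega⟩) (hνpos : 0 < ν ⟨n - 1, by omega⟩)
    (hcond : 2 * (m : ℝ) / ((p : ℝ) + (n : ℝ)) < min (μ ⟨n - 1, by omega⟩) (ν ⟨n - 1, by omega⟩)) :
    signlessLapEnergy (G₁ ⊕g (⊥ : SimpleGraph (Fin p))) = signlessLapEnergy (G₂ ⊕g (⊥ : SimpleGraph (Fin p))) := by
  classical
  have hcomm : (p : ℝ) + (n : ℝ) = (n : ℝ) + (p : ℝ) := by ring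
  rw [hcomm] at hcond
  have hμlb : ∀ i, 2 * (m : ℝ) / ((n : ℝ) + (p : ℝ)) < μ i := fun i =>
    lt_of_lt_of_le (lt_of_lt_of_le hcond (min_le_left _ _))
      (hμmono (by rw [Fin.le_def]; exact Nat.le_pred_of_lt i.isLt))
  have hνlb : ∀ i, 2 * (m : ℝ) / ((n : ℝ) + (p : ℝ)) < ν i := fun i =>
    lt_of_lt_of_le (lt_of_lt_of_le hcond (min_le_right _ _))
      (hνmono (by rw [Fin.le_def]; exact Nat.le_pred_of_lt i.isLt))
  rw [energy_calc m hp G₁ μ hm₁ hμspec hμlb, energy_calc m hp G₂ ν hm₂ hνspec hνlb]
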